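/- Let 𝓗 be a complex separable Hilbert space and let U and U₀ be unitary operators on 𝓗 such that V := U − U₀ is trace class. Then there exist a nonnegative self-adjoint Hilbert–Schmidt operator C on 𝓗 and a bounded operator G on 𝓗 with ‖G‖ ≤ 2 such that V = C ∘ G ∘ C. -/

import Mathlib

open ContinuousLinearMap

variable {𝓗 : Type*} [NormedAddCommGroup 𝓗] [InnerProductSpace ℂ 𝓗] [CompleteSpace 𝓗]

/-- An operator `T` on a complex Hilbert space is trace class iff the sums
`∑ᵢ |⟨fᵢ, T eᵢ⟩|` over finite orthonormal families `(eᵢ)`, `(fᵢ)` are uniformly bounded. -/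
def IsTraceClass (T : 𝓗 →L[ℂ] 𝓗) : Prop :=
  ∃ M : ℝ, ∀ (n : ℕ) (e f : Fin n → 𝓗), Orthonormal ℂ e → Orthonormal ℂ f →
    ∑ i, ‖(inner ℂ (f i) (T (e i)) : ℂ)‖ ≤ M

/-- The trace norm `‖T‖₁ = sup { ∑ᵢ |⟨fᵢ, T eᵢ⟩| }`, the supremum being taken over all
finite orthonormal families `(eᵢ)`, `(fᵢ)` in the Hilbert space. -/
noncomputable def traceNorm (T : 𝓗 →L[ℂ] 𝓗) : ℝ :=
  sSup { x : ℝ | ∃ (n : ℕ) (e f : Fin n → 𝓗), Orthonormal ℂ e ∧ Orthonormal ℂ f ∧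
    x = ∑ i, ‖(inner ℂ (f i) (T (e i)) : ℂ)‖ }

/-- An operator `T` is Hilbert–Schmidt iff the sums `∑ᵢ ‖T eᵢ‖²` over finite
orthonormal families `(eᵢ)` are uniformly bounded. -/
def IsHilbertSchmidt (T : 𝓗 →L[ℂ] 𝓗) : Prop :=
  ∃ M : ℝ, ∀ (n : ℕ) (e : Fin n → 𝓗), Orthonormal ℂ e → ∑ i, ‖T (e i)‖ ^ 2 ≤ M

/-- A fixed Hilbert basis of `𝓗`. -/
noncomputable def aHilbertBasis (𝓗 : Type*) [NormedAddCommGroup 𝓗] [InnerProductSpace ℂ 𝓗]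
    [CompleteSpace 𝓗] : HilbertBasis (exists_hilbertBasis ℂ 𝓗).choose ℂ 𝓗 :=
  (exists_hilbertBasis ℂ 𝓗).choose_spec.choose

/-- The trace of an operator, computed in a fixed Hilbert basis.  For a trace class
operator this is independent of the chosen basis and equals the canonical trace. -/
noncomputable def opTrace (T : 𝓗 →L[ℂ] 𝓗) : ℂ :=
  ∑' i, (inner ℂ (aHilbertBasis 𝓗 i) (T (aHilbertBasis 𝓗 i)) : ℂ)

/-- The Cayley transform `(i - H)(i + H)⁻¹` of a bounded self-adjoint operator `H`
(for self-adjoint `H` the operator `i + H` is invertible in `B(𝓗)`, so `Ring.inverse`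
produces its genuine inverse). -/
noncomputable def cayley (H : 𝓗 →L[ℂ] 𝓗) : 𝓗 →L[ℂ] 𝓗 :=
  (Complex.I • (1 : 𝓗 →L[ℂ] 𝓗) - H) * Ring.inverse (Complex.I • (1 : 𝓗 →L[ℂ] 𝓗) + H)


set_option synthInstance.maxHeartbeats 2000000
set_option maxHeartbeats 1000000
set_option linter.unusedSectionVars false

open scoped NNReal

namespace TCFHelp
variable {H : Type*} [NormedAddCommGroup H] [InnerProductSpace ℂ H] [CompleteSpace H]

open ContinuousLinearMap


lemma sa_inner {S : H →L[ℂ] H} (hS : IsSelfAdjoint S) (x y : H) :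
    (inner ℂ (S x) y : ℂ) = inner ℂ x (S y) := by
  conv_lhs => rw [← hS.adjoint_eq]
  exact ContinuousLinearMap.adjoint_inner_left S y x

lemma norm_sq_re_inner (x : H) : ‖x‖ ^ 2 = (inner ℂ x x : ℂ).re := by
  have := inner_self_eq_norm_sq_to_K (𝕜 := ℂ) x
  exact_mod_cast (congrArg Complex.re this).symm

lemma inner_star_mul_self (A : H →L[ℂ] H) (x : H) :
    (inner ℂ x ((star A * A) x) : ℂ) = (‖A x‖ ^ 2 : ℝ) := by
  have h1 : (star A * A) x = (adjoint A) (A x) := by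
    rw [ContinuousLinearMap.star_eq_adjoint]; rfl
  rw [h1, ContinuousLinearMap.adjoint_inner_right, inner_self_eq_norm_sq_to_K]
  norm_cast

lemma norm_apply_eq_of_star_mul_self_eq {A B : H →L[ℂ] H} (h : star A * A = star B * B)
    (x : H) : ‖A x‖ = ‖B x‖ := by
  have h1 := inner_star_mul_self A x
  have h2 := inner_star_mul_self B x
  rw [h] at h1
  have : (‖A x‖ ^ 2 : ℝ) = ‖B x‖ ^ 2 := by
    have := h1.symm.trans h2
    exact_mod_cast this
  have h3 : (0:ℝ) ≤ ‖A x‖ := norm_nonneg _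
  nlinarith [norm_nonneg (B x)]

lemma re_inner_nonneg {S : H →L[ℂ] H} (hS : (0:H →L[ℂ] H) ≤ S) (x : H) :
    0 ≤ (inner ℂ x (S x) : ℂ).re := by
  have hP := (ContinuousLinearMap.nonneg_iff_isPositive S).mp hS
  have := hP.2 x
  rw [ContinuousLinearMap.reApplyInnerSelf_apply] at this
  have hsym : (inner ℂ (S x) x : ℂ) = inner ℂ x (S x) := sa_inner hP.isSelfAdjoint x x
  rwa [hsym] at this

lemma re_inner_mono {S T : H →L[ℂ] H} (h : S ≤ T) (x : H) :
    (inner ℂ x (S x) : ℂ).re ≤ (inner ℂ x (T x) : ℂ).re := by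
  have h0 : (0:H →L[ℂ] H) ≤ T - S := sub_nonneg.mpr h
  have := re_inner_nonneg h0 x
  rw [ContinuousLinearMap.sub_apply, inner_sub_right] at this
  simp only [Complex.sub_re] at this
  linarith



lemma douglas (A B : H →L[ℂ] H) (N : ℝ) (hN : 0 ≤ N) (h : ∀ x, ‖A x‖ ≤ N * ‖B x‖) :
    ∃ D : H →L[ℂ] H, ‖D‖ ≤ N ∧ D ∘L B = A ∧
      ∀ (z : H) (r : ℝ), 0 ≤ r → (∀ x, ‖(inner ℂ (A x) z : ℂ)‖ ≤ r * ‖B x‖) →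
        ∀ u, ‖(inner ℂ (D u) z : ℂ)‖ ≤ r * ‖u‖ := by
  classical
  set p : Submodule ℂ H := LinearMap.range (B : H →ₗ[ℂ] H) with hp
  have key : ∀ x y : H, B x = B y → A x = A y := by
    intro x y hxy
    have h0 : B (x - y) = 0 := by rw [map_sub, hxy, sub_self]
    have := h (x - y)
    rw [h0] at this
    simp only [norm_zero, mul_zero] at this
    have : A (x - y) = 0 := norm_le_zero_iff.mp this
    rw [map_sub, sub_eq_zero] at this
    exact this
  have hchoose : ∀ u : p, ∃ x, B x = (u : H) := fun u => LinearMap.mem_range.mp u.2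
  let pick : p → H := fun u => (hchoose u).choose
  have hpick : ∀ u : p, B (pick u) = (u : H) := fun u => (hchoose u).choose_spec
  have hf' : ∀ (u : p) (x : H), B x = (u : H) → A (pick u) = A x := by
    intro u x hx
    exact key _ _ (by rw [hpick u, hx])
  let g0 : p →ₗ[ℂ] H :=
    { toFun := fun u => A (pick u)
      map_add' := by
        intro u v
        have : B (pick u + pick v) = ((u + v : p) : H) := by
          rw [map_add, hpick, hpick]; rfl
        show A (pick (u+v)) = A (pick u) + A (pick v)
        rw [hf' (u + v) _ this, map_add]
      map_smul' := by
        intro c u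
        have : B (c • pick u) = ((c • u : p) : H) := by
          rw [map_smul, hpick]; rfl
        show A (pick (c • u)) = (RingHom.id ℂ) c • A (pick u)
        rw [hf' (c • u) _ this, map_smul]; rfl }
  have hg0bound : ∀ u : p, ‖g0 u‖ ≤ N * ‖u‖ := by
    intro u
    have : ‖A (pick u)‖ ≤ N * ‖B (pick u)‖ := h _
    rwa [hpick u] at this
  let g : p →L[ℂ] H := g0.mkContinuous N hg0bound
  have hg : ‖g‖ ≤ N := g0.mkContinuous_norm_le hN hg0bound
  have hgapp : ∀ u : p, g u = A (pick u) := fun _ => rfl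
  set K : Submodule ℂ H := p.topologicalClosure with hK
  have hpK : p ≤ K := p.le_topologicalClosure
  let e0 : p →ₗ[ℂ] K := Submodule.inclusion hpK
  have he0 : ∀ u : p, ((e0 u : H)) = (u : H) := fun _ => rfl
  let e : p →L[ℂ] K := e0.mkContinuous 1 (by
    intro u
    rw [one_mul]
    exact le_of_eq rfl)
  have heapp : ∀ u : p, ((e u : H)) = (u : H) := fun _ => rfl
  have hiso : Isometry e := AddMonoidHomClass.isometry_of_norm e (fun u => rfl)
  have h_e : IsUniformInducing e := hiso.isUniformInducing
  have h_dense : DenseRange e := by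
    intro k
    have hk : (k : H) ∈ closure (p : Set H) := by
      have h2 := k.2
      have h3 : (k : H) ∈ (K : Set H) := h2
      have h4 : (K : Set H) = closure (p : Set H) := Submodule.topologicalClosure_coe p
      rw [← h4]
      exact h3
    have himg : (Subtype.val '' Set.range e : Set H) = (p : Set H) := by
      ext z
      constructor
      · rintro ⟨w, ⟨u, rfl⟩, rfl⟩
        exact (heapp u) ▸ u.2
      · intro hz
        exact ⟨e ⟨z, hz⟩, ⟨⟨z, hz⟩, rfl⟩, rfl⟩
    rw [closure_subtype, himg]
    exact hk
  haveI : CompleteSpace K := Submodule.topologicalClosure.completeSpace p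
  let D1 : K →L[ℂ] H := g.extend e
  have hb : ∀ u : p, ‖u‖ ≤ ((1:ℝ≥0) : ℝ) * ‖e u‖ := by
    intro u; rw [NNReal.coe_one, one_mul]; exact le_of_eq rfl
  have hD1 : ‖D1‖ ≤ ((1:ℝ≥0) : ℝ) * ‖g‖ := g.opNorm_extend_le h_dense hb
  rw [NNReal.coe_one, one_mul] at hD1
  have hD1N : ‖D1‖ ≤ N := hD1.trans hg
  let P : H →L[ℂ] K := Submodule.orthogonalProjectionOnto K
  have hPnorm : ‖P‖ ≤ 1 := Submodule.orthogonalProjectionOnto_norm_le K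
  let D : H →L[ℂ] H := D1 ∘L P
  have hDapp : ∀ x : H, D (B x) = A x := by
    intro x
    have hBx : B x ∈ K := hpK ⟨x, rfl⟩
    have h1 : P (B x) = ⟨B x, hBx⟩ := by
      have := Submodule.orthogonalProjectionOnto_mem_subspace_eq_self (K := K) ⟨B x, hBx⟩
      exact this
    have h2 : (⟨B x, hBx⟩ : K) = e ⟨B x, ⟨x, rfl⟩⟩ := Subtype.ext rfl
    have h3 : D1 (e ⟨B x, ⟨x, rfl⟩⟩) = g ⟨B x, ⟨x, rfl⟩⟩ :=
      ContinuousLinearMap.extend_eq g h_dense h_e _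
    calc D (B x) = D1 (P (B x)) := rfl
      _ = D1 (e ⟨B x, ⟨x, rfl⟩⟩) := by rw [h1, h2]
      _ = g ⟨B x, ⟨x, rfl⟩⟩ := h3
      _ = A x := hf' _ x rfl
  refine ⟨D, ?_, ?_, ?_⟩
  · calc ‖D‖ ≤ ‖D1‖ * ‖P‖ := ContinuousLinearMap.opNorm_comp_le _ _
      _ ≤ N * 1 := mul_le_mul hD1N hPnorm (norm_nonneg P) hN
      _ = N := mul_one N
  · ext x; exact hDapp x
  · intro z r hr hz
    have claim : ∀ v : K, ‖(inner ℂ (D1 v) z : ℂ)‖ ≤ r * ‖v‖ := by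
      intro v
      refine h_dense.induction_on v ?_ ?_
      · apply isClosed_le
        · exact (Continuous.inner (D1.continuous) continuous_const).norm
        · exact continuous_const.mul continuous_norm
      · intro u
        have h3 : D1 (e u) = g u := ContinuousLinearMap.extend_eq g h_dense h_e u
        have h4 : g u = A (pick u) := rfl
        have h5 : ‖e u‖ = ‖B (pick u)‖ := by
          rw [show B (pick u) = (u:H) from hpick u]
          exact rfl
        rw [h3, h4, h5]
        exact hz (pick u)
    intro u
    have h6 : ‖(inner ℂ (D u) z : ℂ)‖ ≤ r * ‖(P u : K)‖ := claim (P u)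
    have h7 : ‖(P u : K)‖ ≤ ‖u‖ := by
      calc ‖(P u : K)‖ ≤ ‖P‖ * ‖u‖ := P.le_opNorm u
        _ ≤ 1 * ‖u‖ := mul_le_mul_of_nonneg_right hPnorm (norm_nonneg u)
        _ = ‖u‖ := one_mul _
    exact h6.trans (mul_le_mul_of_nonneg_left h7 hr)

lemma two_unitaries [Nontrivial H] (T : H →L[ℂ] H) (hT : ‖T‖ ≤ 1) (hinv : IsUnit T) :
    ∃ u v : H →L[ℂ] H, u ∈ unitary (H →L[ℂ] H) ∧ v ∈ unitary (H →L[ℂ] H) ∧ T + T = u + v := by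
  set a : H →L[ℂ] H := star T * T with ha_def
  have ha : (0:H →L[ℂ] H) ≤ a := star_mul_self_nonneg T
  have hasa : IsSelfAdjoint a := IsSelfAdjoint.of_nonneg ha
  have haU : IsUnit a := (hinv.star).mul hinv
  have hanorm : ‖a‖ ≤ 1 := by
    calc ‖a‖ ≤ ‖star T‖ * ‖T‖ := norm_mul_le _ _
      _ ≤ 1 := by rw [norm_star]; nlinarith [norm_nonneg T]
  have hspec01 : ∀ t ∈ spectrum ℝ a, 0 ≤ t ∧ t ≤ 1 := by
    intro t ht
    refine ⟨spectrum_nonneg_of_nonneg ha ht, ?_⟩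
    have h1 : ‖t‖ ≤ ‖a‖ := spectrum.norm_le_norm_of_mem ht
    rw [Real.norm_eq_abs] at h1
    have := le_abs_self t
    linarith
  have hsqrt_cont : ContinuousOn Real.sqrt (spectrum ℝ a) := Real.continuous_sqrt.continuousOn
  have hsqrt1_cont : ContinuousOn (fun t : ℝ => Real.sqrt (1 - t)) (spectrum ℝ a) :=
    (Real.continuous_sqrt.comp (continuous_const.sub continuous_id)).continuousOn
  set S : H →L[ℂ] H := cfc Real.sqrt a with hS_def
  have hSsa : IsSelfAdjoint S := cfc_predicate Real.sqrt a
  have hS2 : S * S = a := by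
    rw [hS_def, ← cfc_mul Real.sqrt Real.sqrt a hsqrt_cont hsqrt_cont]
    have h5 : cfc (fun x => Real.sqrt x * Real.sqrt x) a = cfc (fun x : ℝ => x) a :=
      cfc_congr (fun t ht => Real.mul_self_sqrt (hspec01 t ht).1)
    rw [h5, cfc_id' ℝ a hasa]
  have hSnn : (0:H →L[ℂ] H) ≤ S := cfc_nonneg (fun t _ => Real.sqrt_nonneg t)
  have hST : ∀ x, ‖S x‖ = ‖T x‖ :=
    norm_apply_eq_of_star_mul_self_eq (by rw [hSsa.star_eq, hS2, ha_def])
  -- S is a unit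
  obtain ⟨ua, hua⟩ := haU
  have hSright : S * (S * ↑ua⁻¹) = 1 := by
    rw [← mul_assoc, hS2, ← hua, ua.mul_inv]
  have hSleft : ((↑ua⁻¹ * S : H →L[ℂ] H)) * S = 1 := by
    rw [mul_assoc, hS2, ← hua, ua.inv_mul]
  have hbc : (↑ua⁻¹ * S : H →L[ℂ] H) = S * ↑ua⁻¹ := by
    calc (↑ua⁻¹ * S : H →L[ℂ] H) = (↑ua⁻¹ * S) * (S * (S * ↑ua⁻¹)) := by
          rw [hSright, mul_one]
      _ = ((↑ua⁻¹ * S) * S) * (S * ↑ua⁻¹) := by simp only [mul_assoc]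
      _ = S * ↑ua⁻¹ := by rw [hSleft, one_mul]
  let sU : (H →L[ℂ] H)ˣ := ⟨S, S * ↑ua⁻¹, hSright, by rw [← hbc]; exact hSleft⟩
  set b' : H →L[ℂ] H := S * ↑ua⁻¹ with hb'_def
  have hb'S : S * b' = 1 := hSright
  have hb'S2 : b' * S = 1 := by rw [← hbc]; exact hSleft
  have hSb' : star b' * S = 1 := by
    have h6 : star (S * b') = 1 := by rw [hb'S, star_one]
    rwa [star_mul, hSsa.star_eq] at h6
  set U : H →L[ℂ] H := T * b' with hU_def
  have hUunit : IsUnit U := hinv.mul ⟨sU⁻¹, rfl⟩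
  have hU1 : star U * U = 1 := by
    have e1 : star U * U = star b' * (star T * (T * b')) := by
      rw [hU_def, star_mul]; simp only [mul_assoc]
    have e2 : star T * (T * b') = S * (S * b') := by
      rw [← mul_assoc, ← ha_def, ← hS2, mul_assoc]
    rw [e1, e2, hb'S, mul_one, hSb']
  have hU2 : U * star U = 1 := by
    obtain ⟨uu, huu⟩ := hUunit
    have h7 : star U = ↑uu⁻¹ := by
      calc star U = star U * (↑uu * ↑uu⁻¹) := by rw [uu.mul_inv, mul_one]
        _ = (star U * U) * ↑uu⁻¹ := by rw [← huu]; simp only [mul_assoc, Units.mul_inv_cancel_left]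
        _ = ↑uu⁻¹ := by rw [hU1, one_mul]
    rw [h7, ← huu, uu.mul_inv]
  have hUmem : U ∈ unitary (H →L[ℂ] H) := Unitary.mem_iff.mpr ⟨hU1, hU2⟩
  have hUS : U * S = T := by
    rw [hU_def, mul_assoc, hb'S2, mul_one]
  -- the unitary Z
  have hb1 : (0:H →L[ℂ] H) ≤ 1 - a := by
    rw [ContinuousLinearMap.nonneg_iff_isPositive]
    constructor
    · exact ContinuousLinearMap.isSelfAdjoint_iff_isSymmetric.mp ((IsSelfAdjoint.one (H →L[ℂ] H)).sub hasa)
    · intro x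
      rw [ContinuousLinearMap.reApplyInnerSelf_apply]
      have h8 : ((1 - a : H →L[ℂ] H) x) = x - a x := rfl
      have h9 : (inner ℂ (a x) x : ℂ) = inner ℂ (T x) (T x) := by
        have : a x = (adjoint T) (T x) := by
          rw [ha_def, ContinuousLinearMap.star_eq_adjoint]; rfl
        rw [this]
        exact ContinuousLinearMap.adjoint_inner_left T x (T x)
      rw [h8, inner_sub_left, map_sub, inner_self_eq_norm_sq (𝕜 := ℂ) x, h9,
        inner_self_eq_norm_sq (𝕜 := ℂ) (T x)]
      have h12 : ‖T x‖ ≤ ‖x‖ := by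
        calc ‖T x‖ ≤ ‖T‖ * ‖x‖ := T.le_opNorm x
          _ ≤ 1 * ‖x‖ := mul_le_mul_of_nonneg_right hT (norm_nonneg x)
          _ = ‖x‖ := one_mul _
      nlinarith [norm_nonneg (T x), norm_nonneg x]
  set R0 : H →L[ℂ] H := cfc (fun t : ℝ => Real.sqrt (1 - t)) a with hR0_def
  have hR0sa : IsSelfAdjoint R0 := cfc_predicate _ a
  have hR0sq : R0 * R0 = 1 - a := by
    rw [hR0_def, ← cfc_mul _ _ a hsqrt1_cont hsqrt1_cont]
    have h13 : cfc (fun t : ℝ => Real.sqrt (1 - t) * Real.sqrt (1 - t)) a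
        = cfc (fun t : ℝ => 1 - t) a :=
      cfc_congr (fun t ht => Real.mul_self_sqrt (by linarith [(hspec01 t ht).2]))
    rw [h13, cfc_sub (fun _ : ℝ => (1:ℝ)) (fun t : ℝ => t) a, cfc_const_one ℝ a hasa,
      cfc_id' ℝ a hasa]
  have hComm : S * R0 = R0 * S := (cfc_commute_cfc Real.sqrt (fun t : ℝ => Real.sqrt (1 - t)) a).eq
  set Z : H →L[ℂ] H := S + Complex.I • R0 with hZ_def
  have hZstar : star Z = S - Complex.I • R0 := by
    rw [hZ_def, star_add, hSsa.star_eq, star_smul, hR0sa.star_eq]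
    simp [Complex.conj_I, neg_smul, sub_eq_add_neg]
  have hmul : ∀ (σ : ℂ) (c d : H →L[ℂ] H), (σ • c) * d = σ • (c * d) := fun σ c d =>
    smul_mul_assoc σ c d
  have expand_gen : ∀ R : H →L[ℂ] H, S * R = R * S → R * R = 1 - a →
      (S - Complex.I • R) * (S + Complex.I • R) = 1 := by
    intro R hC hR
    have e3 : (S - Complex.I • R) * (S + Complex.I • R)
        = S * S + Complex.I • (S * R) - Complex.I • (R * S)
          - ((Complex.I * Complex.I) • (R * R)) := by
      rw [sub_mul, mul_add, mul_add, mul_smul_comm, smul_mul_assoc, smul_mul_assoc,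
        mul_smul_comm, smul_smul]
      abel
    rw [e3, hC, hS2, hR]
    simp only [Complex.I_mul_I, neg_smul, one_smul, sub_neg_eq_add]
    abel
  have hZ1 : star Z * Z = 1 := by
    rw [hZstar, hZ_def]
    exact expand_gen R0 hComm hR0sq
  have hZ2 : Z * star Z = 1 := by
    have h := expand_gen (-R0) (by rw [mul_neg, hComm, neg_mul]) (by rw [neg_mul_neg]; exact hR0sq)
    rw [hZstar, hZ_def]
    rw [smul_neg, sub_neg_eq_add, ← sub_eq_add_neg] at h
    exact h
  have hZmem : Z ∈ unitary (H →L[ℂ] H) := Unitary.mem_iff.mpr ⟨hZ1, hZ2⟩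
  refine ⟨U * Z, U * star Z, mul_mem hUmem hZmem, mul_mem hUmem (Unitary.star_mem hZmem), ?_⟩
  have hZsum : Z + star Z = S + S := by
    rw [hZstar, hZ_def]
    abel
  rw [← mul_add, hZsum, mul_add, hUS]

lemma four_unitaries [Nontrivial H] (X : H →L[ℂ] H) (hX : ‖X‖ ≤ 1) :
    ∃ u : Fin 4 → (H →L[ℂ] H), (∀ j, u j ∈ unitary (H →L[ℂ] H)) ∧
      X = u 0 + u 1 + u 2 + u 3 := by
  have hscalar_unit : ∀ c : ℂ, c ≠ 0 → IsUnit ((c • 1 : H →L[ℂ] H)) := by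
    intro c hc
    exact ⟨⟨c • 1, c⁻¹ • 1,
      by rw [smul_mul_assoc, one_mul, smul_smul, mul_inv_cancel₀ hc, one_smul],
      by rw [smul_mul_assoc, one_mul, smul_smul, inv_mul_cancel₀ hc, one_smul]⟩, rfl⟩
  have hXq : ‖((4:ℂ)⁻¹ • X : H →L[ℂ] H)‖ ≤ 4⁻¹ := by
    rw [norm_smul]
    have h : ‖(4:ℂ)⁻¹‖ = (4:ℝ)⁻¹ := by simp
    rw [h]
    calc (4:ℝ)⁻¹ * ‖X‖ ≤ 4⁻¹ * 1 := by
          exact mul_le_mul_of_nonneg_left hX (by norm_num)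
      _ = 4⁻¹ := mul_one _
  have hhalf : ‖((2:ℂ)⁻¹ • 1 : H →L[ℂ] H)‖ = (2:ℝ)⁻¹ := by
    rw [norm_smul, norm_one, mul_one]
    simp
  set Ap : H →L[ℂ] H := (4:ℂ)⁻¹ • X + (2:ℂ)⁻¹ • 1 with hAp
  set Am : H →L[ℂ] H := (4:ℂ)⁻¹ • X - (2:ℂ)⁻¹ • 1 with hAm
  have hApn : ‖Ap‖ ≤ 1 := by
    calc ‖Ap‖ ≤ ‖((4:ℂ)⁻¹ • X : H →L[ℂ] H)‖ + ‖((2:ℂ)⁻¹ • 1 : H →L[ℂ] H)‖ := norm_add_le _ _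
      _ ≤ 4⁻¹ + 2⁻¹ := by rw [hhalf]; linarith
      _ ≤ 1 := by norm_num
  have hAmn : ‖Am‖ ≤ 1 := by
    calc ‖Am‖ ≤ ‖((4:ℂ)⁻¹ • X : H →L[ℂ] H)‖ + ‖((2:ℂ)⁻¹ • 1 : H →L[ℂ] H)‖ := norm_sub_le _ _
      _ ≤ 4⁻¹ + 2⁻¹ := by rw [hhalf]; linarith
      _ ≤ 1 := by norm_num
  have hXhalf : ‖(-((2:ℂ)⁻¹ • X) : H →L[ℂ] H)‖ < 1 := by
    rw [norm_neg, norm_smul]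
    have h : ‖(2:ℂ)⁻¹‖ = (2:ℝ)⁻¹ := by simp
    rw [h]
    nlinarith [norm_nonneg X]
  have hXhalf' : ‖((2:ℂ)⁻¹ • X : H →L[ℂ] H)‖ < 1 := by
    rw [← norm_neg]; exact hXhalf
  have hApU : IsUnit Ap := by
    have h1 : Ap = ((2:ℂ)⁻¹ • 1 : H →L[ℂ] H) * (1 - -((2:ℂ)⁻¹ • X)) := by
      rw [smul_mul_assoc, one_mul, sub_neg_eq_add, smul_add, smul_smul, hAp]
      module
    rw [h1]
    exact (hscalar_unit _ (by norm_num)).mul (isUnit_one_sub_of_norm_lt_one hXhalf)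
  have hAmU : IsUnit Am := by
    have h1 : Am = ((-2:ℂ)⁻¹ • 1 : H →L[ℂ] H) * (1 - (2:ℂ)⁻¹ • X) := by
      rw [smul_mul_assoc, one_mul, smul_sub, smul_smul, hAm]
      module
    rw [h1]
    exact (hscalar_unit _ (by norm_num)).mul (isUnit_one_sub_of_norm_lt_one hXhalf')
  obtain ⟨u1, u2, hu1, hu2, hsum1⟩ := two_unitaries Ap hApn hApU
  obtain ⟨u3, u4, hu3, hu4, hsum2⟩ := two_unitaries Am hAmn hAmU
  refine ⟨![u1, u2, u3, u4], ?_, ?_⟩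
  · intro j
    fin_cases j <;> simpa
  · have hsplit : X = (Ap + Ap) + (Am + Am) := by
      rw [hAp, hAm]
      module
    simp only [Matrix.cons_val_zero, Matrix.cons_val_one, Matrix.head_cons]
    rw [hsplit, hsum1, hsum2]
    abel


lemma orthonormal_unitary {W : H →L[ℂ] H} (hW : W ∈ unitary (H →L[ℂ] H)) {n : ℕ}
    {e : Fin n → H} (he : Orthonormal ℂ e) : Orthonormal ℂ (fun i => W (e i)) := by
  rw [orthonormal_iff_ite] at he ⊢
  intro i j
  have h1 : (inner ℂ (W (e i)) (W (e j)) : ℂ) = inner ℂ (e i) ((star W * W) (e j)) := by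
    have h2 : (star W * W) (e j) = (adjoint W) (W (e j)) := by
      rw [ContinuousLinearMap.star_eq_adjoint]; rfl
    rw [h2, ContinuousLinearMap.adjoint_inner_right]
  rw [h1, (Unitary.mem_iff.mp hW).1, ContinuousLinearMap.one_apply]
  exact he i j

lemma four_unitaries' [Nontrivial H] (X : H →L[ℂ] H) (hX : ‖X‖ ≤ 1) :
    ∃ u : Fin 4 → (H →L[ℂ] H), (∀ j, u j ∈ unitary (H →L[ℂ] H)) ∧ X = ∑ j, u j := by
  obtain ⟨u, hu, hsum⟩ := four_unitaries X hX
  exact ⟨u, hu, by rw [Fin.sum_univ_four]; exact hsum⟩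

lemma trace_bound_contract [Nontrivial H] (V : H →L[ℂ] H) (M : ℝ)
    (hV : ∀ (n : ℕ) (e f : Fin n → H), Orthonormal ℂ e → Orthonormal ℂ f →
      ∑ i, ‖(inner ℂ (f i) (V (e i)) : ℂ)‖ ≤ M)
    (X Y : H →L[ℂ] H) (hX : ‖X‖ ≤ 1) (hY : ‖Y‖ ≤ 1) (n : ℕ) (e : Fin n → H)
    (he : Orthonormal ℂ e) :
    ∑ i, ‖(inner ℂ (X (e i)) (V (Y (e i))) : ℂ)‖ ≤ 16 * M := by
  obtain ⟨u, hu, hX4⟩ := four_unitaries' X hX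
  obtain ⟨w, hw, hY4⟩ := four_unitaries' Y hY
  have hterm : ∀ i, ‖(inner ℂ (X (e i)) (V (Y (e i))) : ℂ)‖
      ≤ ∑ j : Fin 4, ∑ k : Fin 4, ‖(inner ℂ (u j (e i)) (V (w k (e i))) : ℂ)‖ := by
    intro i
    have h1 : (inner ℂ (X (e i)) (V (Y (e i))) : ℂ)
        = ∑ j : Fin 4, ∑ k : Fin 4, (inner ℂ (u j (e i)) (V (w k (e i))) : ℂ) := by
      rw [hX4, hY4]
      rw [ContinuousLinearMap.sum_apply, ContinuousLinearMap.sum_apply, map_sum, sum_inner]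
      refine Finset.sum_congr rfl fun j _ => ?_
      rw [inner_sum]
    rw [h1]
    exact (norm_sum_le _ _).trans (Finset.sum_le_sum fun j _ => norm_sum_le _ _)
  calc ∑ i, ‖(inner ℂ (X (e i)) (V (Y (e i))) : ℂ)‖
      ≤ ∑ i, ∑ j : Fin 4, ∑ k : Fin 4, ‖(inner ℂ (u j (e i)) (V (w k (e i))) : ℂ)‖ :=
        Finset.sum_le_sum fun i _ => hterm i
    _ = ∑ j : Fin 4, ∑ i, ∑ k : Fin 4, ‖(inner ℂ (u j (e i)) (V (w k (e i))) : ℂ)‖ :=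
        Finset.sum_comm
    _ = ∑ j : Fin 4, ∑ k : Fin 4, ∑ i, ‖(inner ℂ (u j (e i)) (V (w k (e i))) : ℂ)‖ :=
        Finset.sum_congr rfl fun j _ => Finset.sum_comm
    _ ≤ ∑ _j : Fin 4, ∑ _k : Fin 4, M := by
        refine Finset.sum_le_sum fun j _ => Finset.sum_le_sum fun k _ => ?_
        exact hV n (fun i => w k (e i)) (fun i => u j (e i))
          (orthonormal_unitary (hw k) he) (orthonormal_unitary (hu j) he)
    _ = 16 * M := by simp; ring




lemma factor_through (V C : H →L[ℂ] H) (hCsa : IsSelfAdjoint C)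
    (h : ∀ x y : H, ‖(inner ℂ (V x) y : ℂ)‖ ≤ ‖C x‖ * ‖C y‖) :
    ∃ G : H →L[ℂ] H, ‖G‖ ≤ 2 ∧ V = C * G * C := by
  have hnorm_inner_self : ∀ v : H, ‖(inner ℂ v v : ℂ)‖ = ‖v‖ ^ 2 := by
    intro v
    rw [inner_self_eq_norm_sq_to_K]
    norm_num
  have h0 : ∀ x, ‖V x‖ ≤ ‖C‖ * ‖C x‖ := by
    intro x
    rcases eq_or_lt_of_le (norm_nonneg (V x)) with hVx | hVx
    · rw [← hVx]; positivity
    · have h1 := h x (V x)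
      rw [hnorm_inner_self (V x)] at h1
      have h2 : ‖C (V x)‖ ≤ ‖C‖ * ‖V x‖ := C.le_opNorm (V x)
      nlinarith [norm_nonneg (C x), norm_nonneg C]
  obtain ⟨D, hDn, hDB, hDz⟩ := douglas V C ‖C‖ (norm_nonneg C) h0
  have hDadj : ∀ z, ‖(adjoint D) z‖ ≤ ‖C z‖ := by
    intro z
    have h3 : ∀ x, ‖(inner ℂ (V x) z : ℂ)‖ ≤ ‖C z‖ * ‖C x‖ := by
      intro x
      rw [mul_comm]
      exact h x z
    have h4 := hDz z ‖C z‖ (norm_nonneg _) h3 ((adjoint D) z)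
    have h5 : (inner ℂ (D ((adjoint D) z)) z : ℂ) = inner ℂ ((adjoint D) z) ((adjoint D) z) := by
      rw [← ContinuousLinearMap.adjoint_inner_right]
    rw [h5, hnorm_inner_self] at h4
    rcases eq_or_lt_of_le (norm_nonneg ((adjoint D) z)) with hw | hw
    · rw [← hw]; exact norm_nonneg _
    · nlinarith
  obtain ⟨E, hEn, hEC, -⟩ := douglas (adjoint D) C 1 zero_le_one
    (by intro x; rw [one_mul]; exact hDadj x)
  have hD : D = C ∘L adjoint E := by
    have h6 : adjoint (E ∘L C) = adjoint C ∘L adjoint E := ContinuousLinearMap.adjoint_comp E C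
    rw [hEC, ContinuousLinearMap.adjoint_adjoint, hCsa.adjoint_eq] at h6
    exact h6
  refine ⟨adjoint E, ?_, ?_⟩
  · have h7 : ‖adjoint E‖ = ‖E‖ :=
      (ContinuousLinearMap.adjoint : (H →L[ℂ] H) ≃ₗᵢ⋆[ℂ] (H →L[ℂ] H)).norm_map E
    rw [h7]
    linarith
  · rw [ContinuousLinearMap.mul_def, ContinuousLinearMap.mul_def, ← hDB, hD]

end TCFHelp

/-- Lemma II.6.  Let `𝓗` be a complex separable Hilbert space and `U`, `U₀`
unitary operators on `𝓗` such that `V := U - U₀` is trace class.  Then there exist a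
nonnegative self-adjoint Hilbert–Schmidt operator `C` and a bounded operator `G` with
`‖G‖ ≤ 2` such that `V = C G C`. -/
theorem traceClass_difference_factorization
    [TopologicalSpace.SeparableSpace 𝓗]
    (U U₀ : 𝓗 →L[ℂ] 𝓗) (hU : U ∈ unitary (𝓗 →L[ℂ] 𝓗)) (hU₀ : U₀ ∈ unitary (𝓗 →L[ℂ] 𝓗))
    (hV : IsTraceClass (U - U₀)) :
    ∃ C G : 𝓗 →L[ℂ] 𝓗, C.IsPositive ∧ IsHilbertSchmidt C ∧ ‖G‖ ≤ 2 ∧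
      U - U₀ = C * G * C := by
  classical
  rcases subsingleton_or_nontrivial 𝓗 with hsub | hnt
  · refine ⟨0, 0, ContinuousLinearMap.isPositive_zero, ⟨0, ?_⟩, by norm_num, ?_⟩
    · intro n e he
      simp
    · ext x
      exact Subsingleton.elim _ _
  · obtain ⟨M, hM⟩ := hV
    set V : 𝓗 →L[ℂ] 𝓗 := U - U₀ with hVdef
    set P : 𝓗 →L[ℂ] 𝓗 := CFC.sqrt (star V * V) with hPdef
    have hVVnn : (0:𝓗 →L[ℂ] 𝓗) ≤ star V * V := star_mul_self_nonneg V
    have hPnn : (0:𝓗 →L[ℂ] 𝓗) ≤ P := CFC.sqrt_nonneg _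
    have hPsa : IsSelfAdjoint P := IsSelfAdjoint.of_nonneg hPnn
    have hP2 : P * P = star V * V := CFC.sqrt_mul_sqrt_self _ hVVnn
    have hPV : ∀ x, ‖P x‖ = ‖V x‖ :=
      TCFHelp.norm_apply_eq_of_star_mul_self_eq (by rw [hPsa.star_eq, hP2])
    obtain ⟨W, hWn, hWP, -⟩ := TCFHelp.douglas V P 1 zero_le_one
      (fun x => by rw [one_mul]; exact le_of_eq (hPV x).symm)
    obtain ⟨W₂, hW2n, hW2V, -⟩ := TCFHelp.douglas P V 1 zero_le_one
      (fun x => by rw [one_mul]; exact le_of_eq (hPV x))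
    set Q : 𝓗 →L[ℂ] 𝓗 := W * P * star W with hQdef
    have hQnn : (0:𝓗 →L[ℂ] 𝓗) ≤ Q := by
      rw [ContinuousLinearMap.nonneg_iff_isPositive]
      have h1 := ((ContinuousLinearMap.nonneg_iff_isPositive P).mp hPnn).conj_adjoint W
      have h2 : Q = W ∘L P ∘L ContinuousLinearMap.adjoint W := by
        rw [hQdef, ContinuousLinearMap.star_eq_adjoint]
        rfl
      rw [h2]; exact h1
    set T : 𝓗 →L[ℂ] 𝓗 := P + Q with hTdef
    have hTnn : (0:𝓗 →L[ℂ] 𝓗) ≤ T := by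
      rw [ContinuousLinearMap.nonneg_iff_isPositive]
      exact ((ContinuousLinearMap.nonneg_iff_isPositive P).mp hPnn).add
        ((ContinuousLinearMap.nonneg_iff_isPositive Q).mp hQnn)
    set C : 𝓗 →L[ℂ] 𝓗 := CFC.sqrt T with hCdef
    have hCnn : (0:𝓗 →L[ℂ] 𝓗) ≤ C := CFC.sqrt_nonneg _
    have hCsa : IsSelfAdjoint C := IsSelfAdjoint.of_nonneg hCnn
    have hC2 : C * C = T := CFC.sqrt_mul_sqrt_self _ hTnn
    have hCsq : ∀ x, (‖C x‖^2 : ℝ) = (inner ℂ x (T x) : ℂ).re := by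
      intro x
      have h3 := TCFHelp.inner_star_mul_self C x
      rw [hCsa.star_eq, hC2] at h3
      rw [h3, Complex.ofReal_re]
    set R : 𝓗 →L[ℂ] 𝓗 := CFC.sqrt P with hRdef
    have hRnn : (0:𝓗 →L[ℂ] 𝓗) ≤ R := CFC.sqrt_nonneg _
    have hRsa : IsSelfAdjoint R := IsSelfAdjoint.of_nonneg hRnn
    have hR2 : R * R = P := CFC.sqrt_mul_sqrt_self _ hPnn
    have hRsq : ∀ x, (‖R x‖^2 : ℝ) = (inner ℂ x (P x) : ℂ).re := by
      intro x
      have h3 := TCFHelp.inner_star_mul_self R x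
      rw [hRsa.star_eq, hR2] at h3
      rw [h3, Complex.ofReal_re]
    have hPT : P ≤ T := by
      rw [ContinuousLinearMap.le_def]
      have h4 : T - P = Q := by rw [hTdef]; abel
      rw [h4]
      exact (ContinuousLinearMap.nonneg_iff_isPositive Q).mp hQnn
    have hQT : Q ≤ T := by
      rw [ContinuousLinearMap.le_def]
      have h4 : T - Q = P := by rw [hTdef]; abel
      rw [h4]
      exact (ContinuousLinearMap.nonneg_iff_isPositive P).mp hPnn
    have hRC : ∀ x, ‖R x‖ ≤ ‖C x‖ := by
      intro x
      have h5 : (‖R x‖^2 : ℝ) ≤ ‖C x‖^2 := by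
        rw [hRsq x, hCsq x]
        exact TCFHelp.re_inner_mono hPT x
      nlinarith [norm_nonneg (R x), norm_nonneg (C x)]
    have hQform : ∀ y, (inner ℂ ((ContinuousLinearMap.adjoint W) y)
        (P ((ContinuousLinearMap.adjoint W) y)) : ℂ) = inner ℂ y (Q y) := by
      intro y
      have hQy : Q y = W (P ((ContinuousLinearMap.adjoint W) y)) := by
        rw [hQdef, ContinuousLinearMap.star_eq_adjoint]
        rfl
      rw [hQy]
      exact ContinuousLinearMap.adjoint_inner_left W (P ((ContinuousLinearMap.adjoint W) y)) y
    have hRCW : ∀ y, ‖R ((ContinuousLinearMap.adjoint W) y)‖ ≤ ‖C y‖ := by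
      intro y
      set z := (ContinuousLinearMap.adjoint W) y with hz
      have h5 : (‖R z‖^2 : ℝ) ≤ ‖C y‖^2 := by
        rw [hRsq z, hCsq y]
        calc (inner ℂ z (P z) : ℂ).re = (inner ℂ y (Q y) : ℂ).re := by rw [hQform y]
          _ ≤ (inner ℂ y (T y) : ℂ).re := TCFHelp.re_inner_mono hQT y
      nlinarith [norm_nonneg (R z), norm_nonneg (C y)]
    have hform : ∀ x y : 𝓗, ‖(inner ℂ (V x) y : ℂ)‖ ≤ ‖C x‖ * ‖C y‖ := by
      intro x y
      set z := (ContinuousLinearMap.adjoint W) y with hz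
      have hVx : V x = W (P x) := by rw [← hWP]; rfl
      have e1 : (inner ℂ (V x) y : ℂ) = inner ℂ (P x) z := by
        rw [hVx, hz, ← ContinuousLinearMap.adjoint_inner_right]
      have ePx : P x = R (R x) := by rw [← hR2]; rfl
      have e2 : (inner ℂ (P x) z : ℂ) = inner ℂ (R x) (R z) := by
        rw [ePx]
        exact TCFHelp.sa_inner hRsa (R x) z
      rw [e1, e2]
      calc ‖(inner ℂ (R x) (R z) : ℂ)‖ ≤ ‖R x‖ * ‖R z‖ := norm_inner_le_norm _ _
        _ ≤ ‖C x‖ * ‖C y‖ :=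
          mul_le_mul (hRC x) (hRCW y) (norm_nonneg _) (norm_nonneg _)
    obtain ⟨G, hGn, hGfact⟩ := TCFHelp.factor_through V C hCsa hform
    have hW2adj : ‖ContinuousLinearMap.adjoint W₂‖ ≤ 1 := by
      have h7 : ‖ContinuousLinearMap.adjoint W₂‖ = ‖W₂‖ :=
        (ContinuousLinearMap.adjoint : (𝓗 →L[ℂ] 𝓗) ≃ₗᵢ⋆[ℂ] (𝓗 →L[ℂ] 𝓗)).norm_map W₂
      rw [h7]; exact hW2n
    have hWadj : ‖ContinuousLinearMap.adjoint W‖ ≤ 1 := by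
      have h7 : ‖ContinuousLinearMap.adjoint W‖ = ‖W‖ :=
        (ContinuousLinearMap.adjoint : (𝓗 →L[ℂ] 𝓗) ≃ₗᵢ⋆[ℂ] (𝓗 →L[ℂ] 𝓗)).norm_map W
      rw [h7]; exact hWn
    have hOne : ‖(1:𝓗 →L[ℂ] 𝓗)‖ ≤ 1 := ContinuousLinearMap.norm_id_le
    have hb1 : ∀ x : 𝓗, (inner ℂ x (P x) : ℂ).re
        ≤ ‖(inner ℂ ((ContinuousLinearMap.adjoint W₂) x) (V x) : ℂ)‖ := by
      intro x
      have h4 : P x = W₂ (V x) := by rw [← hW2V]; rfl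
      have h5 : (inner ℂ x (P x) : ℂ) = inner ℂ ((ContinuousLinearMap.adjoint W₂) x) (V x) := by
        rw [h4]
        exact (ContinuousLinearMap.adjoint_inner_left W₂ (V x) x).symm
      rw [h5]
      exact Complex.re_le_norm _
    refine ⟨C, G, (ContinuousLinearMap.nonneg_iff_isPositive C).mp hCnn,
      ⟨16*M + 16*M, ?_⟩, hGn, hGfact⟩
    intro n e he
    have hsplit : ∀ i, ‖C (e i)‖^2
        = (inner ℂ (e i) (P (e i)) : ℂ).re + (inner ℂ (e i) (Q (e i)) : ℂ).re := by
      intro i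
      rw [hCsq (e i)]
      have h8 : T (e i) = P (e i) + Q (e i) := by rw [hTdef]; rfl
      rw [h8, inner_add_right, Complex.add_re]
    have hsum1 : ∑ i, (inner ℂ (e i) (P (e i)) : ℂ).re ≤ 16 * M := by
      calc ∑ i, (inner ℂ (e i) (P (e i)) : ℂ).re
          ≤ ∑ i, ‖(inner ℂ ((ContinuousLinearMap.adjoint W₂) (e i))
              (V ((1:𝓗 →L[ℂ] 𝓗) (e i))) : ℂ)‖ := by
            refine Finset.sum_le_sum fun i _ => ?_
            have h9 := hb1 (e i)
            simpa using h9
        _ ≤ 16 * M := TCFHelp.trace_bound_contract V M hM _ _ hW2adj hOne n e he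
    have hsum2 : ∑ i, (inner ℂ (e i) (Q (e i)) : ℂ).re ≤ 16 * M := by
      calc ∑ i, (inner ℂ (e i) (Q (e i)) : ℂ).re
          ≤ ∑ i, ‖(inner ℂ ((ContinuousLinearMap.adjoint W₂ * ContinuousLinearMap.adjoint W) (e i))
              (V ((ContinuousLinearMap.adjoint W) (e i))) : ℂ)‖ := by
            refine Finset.sum_le_sum fun i _ => ?_
            set z := (ContinuousLinearMap.adjoint W) (e i) with hzdef
            have h10 : (inner ℂ (e i) (Q (e i)) : ℂ) = inner ℂ z (P z) := (hQform (e i)).symm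
            have h11 := hb1 z
            rw [h10]
            have h12 : (ContinuousLinearMap.adjoint W₂ * ContinuousLinearMap.adjoint W) (e i)
                = (ContinuousLinearMap.adjoint W₂) z := rfl
            rw [h12]
            exact h11
        _ ≤ 16 * M := by
            refine TCFHelp.trace_bound_contract V M hM _ _ ?_ hWadj n e he
            calc ‖ContinuousLinearMap.adjoint W₂ * ContinuousLinearMap.adjoint W‖
                ≤ ‖ContinuousLinearMap.adjoint W₂‖ * ‖ContinuousLinearMap.adjoint W‖ :=
                  norm_mul_le _ _
              _ ≤ 1 * 1 := mul_le_mul hW2adj hWadj (norm_nonneg _) zero_le_one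
              _ = 1 := one_mul 1
    calc ∑ i, ‖C (e i)‖^2
        = ∑ i, ((inner ℂ (e i) (P (e i)) : ℂ).re + (inner ℂ (e i) (Q (e i)) : ℂ).re) :=
          Finset.sum_congr rfl fun i _ => hsplit i
      _ = (∑ i, (inner ℂ (e i) (P (e i)) : ℂ).re) + ∑ i, (inner ℂ (e i) (Q (e i)) : ℂ).re :=
          Finset.sum_add_distrib
      _ ≤ 16*M + 16*M := add_le_add hsum1 hsum2
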